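/- arXiv:1112.2642 — 2 statements merged into one kernel-verified Lean document; each statement's English description precedes it below -/
import Mathlib

section
/- Let p be an odd prime, a ≥ 1, and let P = E^p ⋊ C_p be the semidirect product where E = Z/p^a Z and a cyclic group of order p acts on the direct power E^p by cyclically permuting the coordinates. Then the base subgroup E^p is characteristic in P, i.e., every automorphism of P maps E^p onto itself. -/
/-- The additive automorphism of `(Fin p → ZMod (p^a))` given by cyclically
shifting the coordinates. -/
def shiftAddEquiv (p a : ℕ) [NeZero p] :
    (Fin p → ZMod (p ^ a)) ≃+ (Fin p → ZMod (p ^ a)) :=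
  { Equiv.arrowCongr (Equiv.addRight (1 : Fin p)) (Equiv.refl (ZMod (p ^ a))) with
    map_add' := fun _ _ => rfl }

/-- The cyclic-shift automorphism, viewed as a multiplicative automorphism of the
(multiplicatively written) base group `E^p` with `E = ZMod (p^a)`. -/
def cyclicShift (p a : ℕ) [NeZero p] :
    MulAut (Multiplicative (Fin p → ZMod (p ^ a))) :=
  AddEquiv.toMultiplicative (shiftAddEquiv p a)

/-- The action of the cyclic group generated by the shift automorphism on the base. -/
def shiftAction (p a : ℕ) [NeZero p] :
    (Subgroup.zpowers (cyclicShift p a)) →* MulAut (Multiplicative (Fin p → ZMod (p ^ a))) :=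
  (Subgroup.zpowers (cyclicShift p a)).subtype

open Fin.NatCast

variable (p a : ℕ) [NeZero p]

lemma cyclicShift_apply (x : Multiplicative (Fin p → ZMod (p^a))) (i : Fin p) :
    Multiplicative.toAdd (cyclicShift p a x) i = Multiplicative.toAdd x (i - 1) := by
  show Multiplicative.toAdd x (i + -1) = _
  rw [sub_eq_add_neg]

lemma cyclicShift_pow (k : ℕ) (x : Multiplicative (Fin p → ZMod (p^a))) (i : Fin p) :
    Multiplicative.toAdd ((cyclicShift p a ^ k) x) i = Multiplicative.toAdd x (i - k) := by
  induction k generalizing x i with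
  | zero => simp
  | succ n ih =>
    rw [pow_succ']
    rw [show ((cyclicShift p a * cyclicShift p a ^ n) x)
        = (cyclicShift p a) ((cyclicShift p a ^ n) x) from rfl, cyclicShift_apply, ih]
    congr 1
    push_cast
    rw [sub_sub, add_comm (1 : Fin p)]

lemma cyclicShift_pow_card : cyclicShift p a ^ p = 1 := by
  ext x : 1
  refine Multiplicative.toAdd.injective (funext fun i => ?_)
  rw [show Multiplicative.toAdd ((cyclicShift p a ^ p) x) i
      = Multiplicative.toAdd x (i - p) from cyclicShift_pow p a p x i]
  simp

/-- the distinguished element of the base group -/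
def xzero : Multiplicative (Fin p → ZMod (p ^ a)) :=
  Multiplicative.ofAdd (Pi.single (0 : Fin p) (1 : ZMod (p ^ a)))

lemma fin_cast_ne_zero (hp : p.Prime) {k : ℕ} (hk0 : k ≠ 0) (hkp : k < p) :
    (k : Fin p) ≠ 0 := by
  have : ((k : Fin p) : ℕ) = k := Fin.val_cast_of_lt hkp
  intro h
  rw [h] at this
  simp at this
  exact hk0 this.symm

lemma cyclicShift_pow_ne_one (hp : p.Prime) (ha : 1 ≤ a) {k : ℕ} (hk0 : k ≠ 0) (hkp : k < p) :
    cyclicShift p a ^ k ≠ 1 := by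
  haveI : Fact (1 < p ^ a) := ⟨Nat.one_lt_pow (by omega) hp.one_lt⟩
  intro h
  have := cyclicShift_pow p a k (xzero p a) (k : Fin p)
  rw [h] at this
  simp only [MulAut.one_apply] at this
  rw [show ((k : Fin p) - (k:ℕ) ) = 0 by simp] at this
  have h0 : Multiplicative.toAdd (xzero p a) 0 = (1 : ZMod (p^a)) := by
    simp [xzero]
  have hk : Multiplicative.toAdd (xzero p a) (k : Fin p) = (0 : ZMod (p^a)) := by
    simp [xzero, Pi.single_eq_of_ne (fin_cast_ne_zero p hp hk0 hkp)]
  rw [hk, h0] at this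
  exact one_ne_zero this.symm

lemma orderOf_cyclicShift (hp : p.Prime) (ha : 1 ≤ a) : orderOf (cyclicShift p a) = p := by
  have hdvd : orderOf (cyclicShift p a) ∣ p := orderOf_dvd_of_pow_eq_one (cyclicShift_pow_card p a)
  rcases (Nat.Prime.eq_one_or_self_of_dvd hp _ hdvd) with h | h
  · exfalso
    have : cyclicShift p a ^ 1 ≠ 1 := cyclicShift_pow_ne_one p a hp ha one_ne_zero hp.one_lt
    rw [pow_one] at this
    exact this (orderOf_eq_one_iff.mp h)
  · exact h

lemma exists_pow_of_mem (hp : p.Prime) (ha : 1 ≤ a)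
    (h : Subgroup.zpowers (cyclicShift p a)) :
    ∃ k : ℕ, k < p ∧ (h : MulAut (Multiplicative (Fin p → ZMod (p ^ a)))) = cyclicShift p a ^ k := by
  obtain ⟨n, hn⟩ := h.2
  have hpos : (0:ℤ) < p := by exact_mod_cast hp.pos
  have h1 : 0 ≤ n % p := Int.emod_nonneg n (by omega)
  have h2 : n % p < p := Int.emod_lt_of_pos n hpos
  refine ⟨(n % (p : ℤ)).toNat, by omega, ?_⟩
  rw [← hn]
  show cyclicShift p a ^ n = _
  calc cyclicShift p a ^ n
      = cyclicShift p a ^ (n % (orderOf (cyclicShift p a) : ℤ)) := (zpow_mod_orderOf _ n).symm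
    _ = cyclicShift p a ^ ((n % (p:ℤ)).toNat) := by
        rw [orderOf_cyclicShift p a hp ha, ← zpow_natCast, Int.toNat_of_nonneg h1]

/-- fixed points of a nontrivial shift are constant -/
lemma fixed_const (hp : p.Prime) {k : ℕ} (hk0 : k ≠ 0) (hkp : k < p)
    (d : Fin p → ZMod (p ^ a)) (hd : ∀ i, d (i - k) = d i) : ∀ i, d i = d 0 := by
  have h1 : ∀ i, d (i + k) = d i := by
    intro i
    have := hd (i + k)
    rw [add_sub_cancel_right] at this
    exact this.symm
  have hz : ∀ m : ℤ, ∀ i, d (i + m • (k : Fin p)) = d i := by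
    intro m
    induction m using Int.induction_on with
    | zero => intro i; simp
    | succ n ih =>
      intro i
      have e : i + ((n:ℤ) + 1) • (k : Fin p) = (i + (n:ℤ) • (k:Fin p)) + k := by
        rw [add_smul, one_smul, add_assoc]
      rw [e, h1, ih]
    | pred n ih =>
      intro i
      have e : i + (-(n:ℤ) - 1) • (k : Fin p) = (i + (-(n:ℤ)) • (k:Fin p)) - k := by
        rw [sub_smul, one_smul, add_sub_assoc]
      rw [e, hd, ih]
  intro i
  have hko : addOrderOf (k : Fin p) = p := by
    have hdvd : addOrderOf (k : Fin p) ∣ p := by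
      apply addOrderOf_dvd_of_nsmul_eq_zero
      rw [show (p • (k : Fin p)) = ((p * k : ℕ) : Fin p) by rw [← nsmul_one k, ← nsmul_one (p * k), mul_nsmul']]
      simp [Fin.natCast_self]
    rcases hp.eq_one_or_self_of_dvd _ hdvd with h | h
    · exact absurd (AddMonoid.addOrderOf_eq_one_iff.mp h) (fin_cast_ne_zero p hp hk0 hkp)
    · exact h
  have htop : AddSubgroup.zmultiples (k : Fin p) = ⊤ := by
    apply AddSubgroup.eq_top_of_card_eq
    rw [Nat.card_zmultiples, hko, Nat.card_eq_fintype_card, Fintype.card_fin]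
  have : i ∈ AddSubgroup.zmultiples (k : Fin p) := htop ▸ AddSubgroup.mem_top i
  obtain ⟨m, hm⟩ := AddSubgroup.mem_zmultiples_iff.mp this
  have := hz m 0
  rw [zero_add, hm] at this
  exact this

section scaffold
variable (p a : ℕ) [NeZero p]

abbrev NN := Multiplicative (Fin p → ZMod (p ^ a))
abbrev PP := SemidirectProduct (NN p a) (Subgroup.zpowers (cyclicShift p a)) (shiftAction p a)

lemma finite_NN : Finite (NN p a) := by
  haveI : NeZero (p ^ a) := ⟨pow_ne_zero a (NeZero.ne p)⟩
  infer_instance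

lemma finite_PP : Finite (PP p a) := by
  haveI := finite_NN p a
  haveI : Finite (MulAut (NN p a)) :=
    Finite.of_injective (fun f => (f : NN p a ≃ NN p a))
      (fun f g h => by ext x : 1; exact congrFun (congrArg (fun e : NN p a ≃ NN p a => (e : NN p a → NN p a)) h) x)
  exact Finite.of_injective (fun g : PP p a => (g.left, g.right))
    (fun g h e => SemidirectProduct.ext (congrArg Prod.fst e) (congrArg Prod.snd e))

lemma mem_base_iff (g : PP p a) :
    g ∈ (SemidirectProduct.inl (φ := shiftAction p a)).range ↔ g.right = 1 := by
  rw [SemidirectProduct.range_inl_eq_ker_rightHom, MonoidHom.mem_ker]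
  rfl

lemma card_base : Nat.card ((SemidirectProduct.inl (N := NN p a)
    (G := Subgroup.zpowers (cyclicShift p a)) (φ := shiftAction p a)).range) = p ^ (a * p) := by
  haveI : NeZero (p ^ a) := ⟨pow_ne_zero a (NeZero.ne p)⟩
  rw [← Nat.card_congr (MonoidHom.ofInjective (SemidirectProduct.inl_injective
    (φ := shiftAction p a))).toEquiv]
  rw [Nat.card_congr Multiplicative.toAdd, Nat.card_fun]
  simp [← pow_mul]

end scaffold

section central
variable (p a : ℕ) [NeZero p]

lemma right_eq_one_of_fixes (hp : p.Prime) (ha : 1 ≤ a)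
    (h : Subgroup.zpowers (cyclicShift p a))
    (hfix : (h : MulAut (NN p a)) (xzero p a) = xzero p a) : h = 1 := by
  haveI : Fact (1 < p ^ a) := ⟨Nat.one_lt_pow (by omega) hp.one_lt⟩
  obtain ⟨k, hkp, hk⟩ := exists_pow_of_mem p a hp ha h
  rcases Nat.eq_zero_or_pos k with rfl | hk0
  · exact Subtype.ext (by simpa using hk)
  · exfalso
    have := congrFun (congrArg Multiplicative.toAdd hfix) (k : Fin p)
    rw [hk] at this
    rw [cyclicShift_pow, show ((k : Fin p) - (k : ℕ)) = 0 by simp] at this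
    have h0 : Multiplicative.toAdd (xzero p a) 0 = (1 : ZMod (p^a)) := by simp [xzero]
    have hkk : Multiplicative.toAdd (xzero p a) (k : Fin p) = (0 : ZMod (p^a)) := by
      simp [xzero, Pi.single_eq_of_ne (fin_cast_ne_zero p hp (by omega) hkp)]
    rw [h0, hkk] at this
    exact one_ne_zero this

lemma centralizer_xzero (hp : p.Prime) (ha : 1 ≤ a) :
    Subgroup.centralizer {SemidirectProduct.inl (N := NN p a)
        (G := Subgroup.zpowers (cyclicShift p a)) (φ := shiftAction p a) (xzero p a)} =
      (SemidirectProduct.inl (N := NN p a)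
        (G := Subgroup.zpowers (cyclicShift p a)) (φ := shiftAction p a)).range := by
  ext g
  rw [Subgroup.mem_centralizer_singleton_iff, mem_base_iff]
  constructor
  · intro hcomm
    -- left components
    have hl := congrArg SemidirectProduct.left hcomm
    simp only [SemidirectProduct.mul_left, SemidirectProduct.left_inl,
      SemidirectProduct.right_inl, map_one, MulAut.one_apply] at hl
    -- hl : g.left * φ g.right (xzero) = xzero * g.left  (or flipped)
    have hfix : (shiftAction p a g.right) (xzero p a) = xzero p a := by
      have := hl
      rw [mul_comm (xzero p a) g.left] at this
      exact mul_left_cancel this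
    exact right_eq_one_of_fixes p a hp ha g.right hfix
  · intro hg
    have hgeq : g = SemidirectProduct.inl g.left := by
      apply SemidirectProduct.ext
      · simp
      · simp [hg]
    rw [hgeq, ← map_mul, ← map_mul, mul_comm]

end central

section counting
variable (p a : ℕ) [NeZero p]

lemma card_centralizer_le (hp : p.Prime) (ha : 1 ≤ a) (g : PP p a) (hg : g.right ≠ 1) :
    Nat.card (Subgroup.centralizer {g}) ≤ p ^ (a + 1) := by
  haveI : NeZero (p ^ a) := ⟨pow_ne_zero a (NeZero.ne p)⟩
  haveI := finite_NN p a
  obtain ⟨k, hkp, hk⟩ := exists_pow_of_mem p a hp ha g.right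
  have hk0 : k ≠ 0 := by
    rintro rfl
    exact hg (Subtype.ext (by simpa using hk))
  have hinj : Function.Injective (fun x : Subgroup.centralizer {g} =>
      (((x : PP p a).right : Subgroup.zpowers (cyclicShift p a)),
        Multiplicative.toAdd (x : PP p a).left 0)) := by
    rintro x y hxy
    have hright : (x : PP p a).right = (y : PP p a).right := congrArg Prod.fst hxy
    have hzero : Multiplicative.toAdd (x : PP p a).left 0
        = Multiplicative.toAdd (y : PP p a).left 0 := congrArg Prod.snd hxy
    obtain ⟨m, hmp, hm⟩ := exists_pow_of_mem p a hp ha (x : PP p a).right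
    have hx := Subgroup.mem_centralizer_singleton_iff.mp x.2
    have hy := Subgroup.mem_centralizer_singleton_iff.mp y.2
    -- pointwise equations
    have e : ∀ z : PP p a, z ∈ Subgroup.centralizer {g} → z.right = (x : PP p a).right →
        ∀ i, Multiplicative.toAdd z.left i - Multiplicative.toAdd z.left (i - (k : Fin p))
          = Multiplicative.toAdd g.left i - Multiplicative.toAdd g.left (i - (m : Fin p)) := by
      intro z hz hzr i
      have hcomm := Subgroup.mem_centralizer_singleton_iff.mp hz
      have key := congrArg (fun w : PP p a => Multiplicative.toAdd w.left i) hcomm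
      simp only [SemidirectProduct.mul_left, toAdd_mul, Pi.add_apply] at key
      rw [show shiftAction p a z.right = (z.right : MulAut (NN p a)) from rfl,
        show shiftAction p a g.right = (g.right : MulAut (NN p a)) from rfl,
        hzr, hm, hk, cyclicShift_pow, cyclicShift_pow] at key
      -- key : toAdd z.left i + toAdd g.left (i - m) = toAdd g.left i + toAdd z.left (i - k)
      linear_combination key
    have ex := e (x : PP p a) x.2 rfl
    have ey := e (y : PP p a) y.2 hright.symm
    -- difference function is fixed under shift
    set d : Fin p → ZMod (p ^ a) := fun i =>
      Multiplicative.toAdd (x : PP p a).left i - Multiplicative.toAdd (y : PP p a).left i with hd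
    have hfix : ∀ i, d (i - (k : ℕ)) = d i := by
      intro i
      have := (ex i).trans (ey i).symm
      simp only [hd]
      linear_combination -this
    have hconst := fixed_const p a hp hk0 hkp d hfix
    have hdzero : d 0 = 0 := by simp [hd, hzero]
    have hleft : (x : PP p a).left = (y : PP p a).left := by
      apply Multiplicative.toAdd.injective
      funext i
      have := hconst i
      rw [hdzero] at this
      simpa [hd, sub_eq_zero] using this
    exact Subtype.ext (SemidirectProduct.ext hleft hright)
  have hcard := Nat.card_le_card_of_injective _ hinj
  refine le_trans hcard ?_
  rw [Nat.card_prod, Nat.card_zpowers, orderOf_cyclicShift p a hp ha, Nat.card_zmod, pow_succ]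
  ring_nf
  exact le_refl _

end counting


theorem stmt_7 (p a : ℕ) [NeZero p] (hp : p.Prime) (hodd : Odd p) (ha : 1 ≤ a) :
    Subgroup.Characteristic
      ((SemidirectProduct.inl (N := Multiplicative (Fin p → ZMod (p ^ a)))
        (G := Subgroup.zpowers (cyclicShift p a)) (φ := shiftAction p a)).range) := by
  haveI := finite_PP p a
  rw [Subgroup.characteristic_iff_map_le]
  intro σ
  set B := (SemidirectProduct.inl (N := NN p a)
    (G := Subgroup.zpowers (cyclicShift p a)) (φ := shiftAction p a)).range with hB
  set g₀ := SemidirectProduct.inl (N := NN p a)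
    (G := Subgroup.zpowers (cyclicShift p a)) (φ := shiftAction p a) (xzero p a) with hg₀
  have hmap : B.map σ.toMonoidHom = Subgroup.centralizer {σ g₀} := by
    rw [hB, ← centralizer_xzero p a hp ha]
    ext g
    rw [Subgroup.mem_map_equiv, Subgroup.mem_centralizer_singleton_iff,
      Subgroup.mem_centralizer_singleton_iff]
    constructor
    · intro h
      have := congrArg σ h
      simpa [map_mul] using this
    · intro h
      have := congrArg σ.symm h
      simpa [map_mul] using this
  have hcardB : Nat.card B = p ^ (a * p) := card_base p a
  have hcardmap : Nat.card (B.map σ.toMonoidHom) = p ^ (a * p) := by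
    rw [← hcardB]
    exact (Nat.card_congr (B.equivMapOfInjective σ.toMonoidHom
      (MulEquiv.injective σ)).toEquiv).symm
  have hp3 : 3 ≤ p := by
    have h2 : p ≠ 2 := by rintro rfl; exact (by norm_num : ¬ Odd 2) hodd
    have := hp.two_le
    omega
  have hlt : p ^ (a + 1) < p ^ (a * p) := by
    apply Nat.pow_lt_pow_right hp.one_lt
    nlinarith
  have hg0 : (σ g₀).right = 1 := by
    by_contra hne
    have h1 := card_centralizer_le p a hp ha (σ g₀) hne
    rw [hmap] at hcardmap
    rw [hcardmap] at h1
    omega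
  obtain ⟨n', hn'⟩ := (mem_base_iff p a (σ g₀)).mpr hg0
  have hle : B ≤ B.map σ.toMonoidHom := by
    rw [hmap]
    rintro b ⟨n, rfl⟩
    rw [Subgroup.mem_centralizer_singleton_iff, ← hn', ← map_mul, ← map_mul, mul_comm]
  exact (Subgroup.eq_of_le_of_card_ge hle (by rw [hcardmap, hcardB])).ge
end

section
/- Let N be a normal subgroup of a finite group G with G/N abelian, and let χ be a G-invariant complex irreducible character of N that extends to an irreducible character χ̃ of G. Then the map θ ↦ θ·χ̃ is a bijection from the set of linear characters of G that are trivial on N onto the set of irreducible characters of G whose restriction to N contains χ; in particular there are exactly |G/N| such characters and they are pairwise distinct. -/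
open CategoryTheory

noncomputable section
namespace Gal

variable {G : Type} [Group G]

/-- Twist a representation by a ℂ-valued character. -/
def twistRep (θ : G →* ℂ) {V : Type} [AddCommGroup V] [Module ℂ V]
    (ρ : Representation ℂ G V) : Representation ℂ G V where
  toFun g := θ g • ρ g
  map_one' := by simp
  map_mul' g h := by
    simp only [map_mul]
    rw [smul_mul_smul_comm]

def twist (θ : G →* ℂ) (V : FDRep ℂ G) : FDRep ℂ G := FDRep.of (twistRep θ V.ρ)

@[simp] lemma twist_char (θ : G →* ℂ) (V : FDRep ℂ G) (g : G) :
    (twist θ V).character g = θ g * V.character g := by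
  show LinearMap.trace ℂ _ (θ g • V.ρ g) = _
  rw [map_smul]
  rfl

def invHom (θ : G →* ℂ) : G →* ℂ where
  toFun g := θ g⁻¹
  map_one' := by simp
  map_mul' a b := by
    show θ (a * b)⁻¹ = θ a⁻¹ * θ b⁻¹
    rw [mul_inv_rev, map_mul, mul_comm]

lemma invHom_mul_self (θ : G →* ℂ) (g : G) : invHom θ g * θ g = 1 := by
  show θ g⁻¹ * θ g = 1
  rw [← map_mul, inv_mul_cancel, map_one]

def twistTwistIso (θ η : G →* ℂ) (h : ∀ g : G, η g * θ g = 1) (V : FDRep ℂ G) :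
    twist η (twist θ V) ≅ V :=
  Action.mkIso (Iso.refl _) (by
    intro g
    apply FGModuleCat.hom_ext
    show (η g • (θ g • V.ρ g) : ↑V →ₗ[ℂ] ↑V) = V.ρ g
    rw [smul_smul, h, one_smul])

def twistOneIso (V : FDRep ℂ G) : twist 1 V ≅ V :=
  Action.mkIso (Iso.refl _) (by
    intro g
    apply FGModuleCat.hom_ext
    show ((1 : G →* ℂ) g • V.ρ g : ↑V →ₗ[ℂ] ↑V) = V.ρ g
    rw [MonoidHom.one_apply, one_smul])

def twistHom (η : G →* ℂ) {X Y : FDRep ℂ G} (f : X ⟶ Y) : twist η X ⟶ twist η Y where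
  hom := f.hom
  comm := by
    intro g
    apply FGModuleCat.hom_ext
    ext x
    show f.hom.hom.hom (η g • X.ρ g x) = η g • Y.ρ g (f.hom.hom.hom x)
    rw [LinearMap.map_smul]
    exact congrArg (η g • ·) (congrArg (fun t => t.hom.hom x) (f.comm g))

@[simp] lemma twistHom_hom (η : G →* ℂ) {X Y : FDRep ℂ G} (f : X ⟶ Y) :
    (twistHom η f).hom = f.hom := rfl

lemma action_eq_zero_iff {X Y : FDRep ℂ G} (f : X ⟶ Y) : f = 0 ↔ f.hom = 0 := by
  constructor
  · intro h; rw [h]; rfl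
  · intro h; apply Action.Hom.ext; rw [h]; rfl

theorem simple_twist (θ : G →* ℂ) (V : FDRep ℂ G) [Simple V] : Simple (twist θ V) := by
  constructor
  intro Y f m
  let e : twist (invHom θ) (twist θ V) ≅ V := twistTwistIso θ (invHom θ) (invHom_mul_self θ) V
  let k : twist (invHom θ) Y ⟶ V := twistHom (invHom θ) f ≫ e.hom
  haveI hm1 : Mono f.hom := (Action.forget _ _).map_mono f
  haveI hm2 : Mono (twistHom (invHom θ) f) :=
    (Action.forget _ _).mono_of_mono_map (show Mono (twistHom (invHom θ) f).hom from hm1)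
  haveI : Mono k := mono_comp _ _
  have hk := Simple.mono_isIso_iff_nonzero k
  have hzero : f = 0 ↔ k = 0 := by
    rw [action_eq_zero_iff f, action_eq_zero_iff k]
    show f.hom = 0 ↔ (twistHom (invHom θ) f ≫ e.hom).hom = 0
    rw [Action.comp_hom, twistHom_hom]
    constructor
    · intro h; exact (congrArg (· ≫ e.hom.hom) h).trans Limits.zero_comp
    · intro h
      exact (cancel_mono e.hom.hom).mp (h.trans Limits.zero_comp.symm)
  constructor
  · intro hf h0
    refine hk.mp ?_ (hzero.mp h0)
    haveI : IsIso f.hom := inferInstanceAs (IsIso ((Action.forget _ _).map f))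
    haveI : IsIso (twistHom (invHom θ) f).hom := show IsIso f.hom from inferInstance
    haveI : IsIso (twistHom (invHom θ) f) := Action.isIso_of_hom_isIso _
    exact inferInstanceAs (IsIso (twistHom (invHom θ) f ≫ e.hom))
  · intro h0
    have hki : IsIso k := hk.mpr (fun hk0 => h0 (hzero.mpr hk0))
    have heq : twistHom (invHom θ) f = k ≫ e.inv := by
      show twistHom (invHom θ) f = (twistHom (invHom θ) f ≫ e.hom) ≫ e.inv
      rw [Category.assoc, e.hom_inv_id, Category.comp_id]
    haveI : IsIso (twistHom (invHom θ) f) := by rw [heq]; infer_instance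
    haveI : IsIso (twistHom (invHom θ) f).hom :=
      inferInstanceAs (IsIso ((Action.forget _ _).map (twistHom (invHom θ) f)))
    haveI : IsIso f.hom := show IsIso (twistHom (invHom θ) f).hom from inferInstance
    exact Action.isIso_of_hom_isIso f

end Gal

namespace Gal

open scoped Classical

variable {H : Type} [Group H] [Fintype H]

lemma orth (V W : FDRep ℂ H) [Simple V] [Simple W] :
    ∑ g : H, V.character g * W.character g⁻¹ =
      if Nonempty (V ≅ W) then (Fintype.card H : ℂ) else 0 := by
  letI i2 : Invertible (Nat.card H : ℂ) :=
    invertibleOfNonzero (Nat.cast_ne_zero.mpr Nat.card_pos.ne')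
  have h := FDRep.char_orthonormal (k := ℂ) (G := H) V W
  have h2 := congrArg (fun z => (Nat.card H : ℂ) * z) h
  simp only [smul_eq_mul, ← mul_assoc, mul_invOf_self, one_mul] at h2
  have h3 : ∑ g : H, V.character g * W.character g⁻¹ =
      (Fintype.card H : ℂ) * if Nonempty (V ≅ W) then 1 else 0 := by
    rw [← Nat.card_eq_fintype_card, ← h2, mul_inv_cancel₀ (Nat.cast_ne_zero.mpr Nat.card_pos.ne'),
      one_mul]
  rw [h3]
  split <;> simp

end Gal

namespace Gal

variable {G : Type} [Group G] [Fintype G] (N : Subgroup G) [N.Normal]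

abbrev Theta (N : Subgroup G) := {θ : G →* ℂ // ∀ n ∈ N, θ n = 1}

def thetaEquiv : Theta N ≃ ((G ⧸ N) →* ℂˣ) where
  toFun θ := (QuotientGroup.lift N θ.1 (fun n hn => θ.2 n hn)).toHomUnits
  invFun ψ := ⟨(Units.coeHom ℂ).comp ((ψ.comp (QuotientGroup.mk' N))),
    fun n hn => by simp [(QuotientGroup.eq_one_iff n).mpr hn]⟩
  left_inv θ := by
    apply Subtype.ext
    ext g
    rfl
  right_inv ψ := by
    refine MonoidHom.ext fun q => ?_
    refine QuotientGroup.induction_on q fun g => ?_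
    exact Units.ext rfl

lemma theta_card (hab : ∀ a b : G ⧸ N, a * b = b * a) :
    Nat.card (Theta N) = Nat.card (G ⧸ N) := by
  letI : CommGroup (G ⧸ N) := { (inferInstance : Group (G ⧸ N)) with mul_comm := hab }
  haveI : NeZero ((Monoid.exponent (G ⧸ N) : ℂ)) :=
    ⟨Nat.cast_ne_zero.mpr (Monoid.exponent_ne_zero_of_finite)⟩
  obtain ⟨e⟩ := CommGroup.monoidHom_mulEquiv_of_hasEnoughRootsOfUnity (G ⧸ N) ℂ
  rw [Nat.card_congr (thetaEquiv N), Nat.card_congr e.toEquiv]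

lemma theta_finite (hab : ∀ a b : G ⧸ N, a * b = b * a) : Finite (Theta N) := by
  letI : CommGroup (G ⧸ N) := { (inferInstance : Group (G ⧸ N)) with mul_comm := hab }
  haveI : NeZero ((Monoid.exponent (G ⧸ N) : ℂ)) :=
    ⟨Nat.cast_ne_zero.mpr (Monoid.exponent_ne_zero_of_finite)⟩
  obtain ⟨e⟩ := CommGroup.monoidHom_mulEquiv_of_hasEnoughRootsOfUnity (G ⧸ N) ℂ
  haveI : Finite ((G ⧸ N) →* ℂˣ) := Finite.of_equiv _ e.toEquiv.symm
  exact Finite.of_equiv _ (thetaEquiv N).symm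

open scoped Classical in
lemma theta_sum (hab : ∀ a b : G ⧸ N, a * b = b * a) [Fintype (Theta N)] (g : G) :
    ∑ θ : Theta N, θ.1 g = if g ∈ N then (Nat.card (G ⧸ N) : ℂ) else 0 := by
  letI : CommGroup (G ⧸ N) := { (inferInstance : Group (G ⧸ N)) with mul_comm := hab }
  haveI : NeZero ((Monoid.exponent (G ⧸ N) : ℂ)) :=
    ⟨Nat.cast_ne_zero.mpr (Monoid.exponent_ne_zero_of_finite)⟩
  haveI : Finite ((G ⧸ N) →* ℂˣ) := Finite.of_equiv _ (thetaEquiv N)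
  letI : Fintype ((G ⧸ N) →* ℂˣ) := Fintype.ofFinite _
  have h1 : ∑ θ : Theta N, θ.1 g
      = ∑ ψ : (G ⧸ N) →* ℂˣ, ((ψ (QuotientGroup.mk g) : ℂ)) :=
    Fintype.sum_equiv (thetaEquiv N) _ _ (fun θ => rfl)
  have hcard : Fintype.card ((G ⧸ N) →* ℂˣ) = Nat.card (G ⧸ N) := by
    obtain ⟨e⟩ := CommGroup.monoidHom_mulEquiv_of_hasEnoughRootsOfUnity (G ⧸ N) ℂ
    rw [← Nat.card_eq_fintype_card, Nat.card_congr e.toEquiv]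
  by_cases hg : g ∈ N
  · have hone : (QuotientGroup.mk g : G ⧸ N) = 1 := (QuotientGroup.eq_one_iff g).mpr hg
    rw [if_pos hg, h1, hone]
    simp [hcard]
  · obtain ⟨ψ₀, hψ₀⟩ := CommGroup.exists_apply_ne_one_of_hasEnoughRootsOfUnity (G ⧸ N) ℂ
      (a := QuotientGroup.mk g) (by rwa [ne_eq, QuotientGroup.eq_one_iff])
    rw [if_neg hg, h1]
    have key : ∑ ψ : (G ⧸ N) →* ℂˣ, ((ψ (QuotientGroup.mk g) : ℂ))
        = (ψ₀ (QuotientGroup.mk g) : ℂ)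
          * ∑ ψ : (G ⧸ N) →* ℂˣ, ((ψ (QuotientGroup.mk g) : ℂ)) := by
      rw [Finset.mul_sum]
      refine Fintype.sum_bijective (ψ₀⁻¹ * ·) (Group.mulLeft_bijective ψ₀⁻¹) _ _ (fun ψ => ?_)
      show ((ψ (QuotientGroup.mk g) : ℂ))
          = (ψ₀ (QuotientGroup.mk g) : ℂ) * ((ψ₀⁻¹ * ψ) (QuotientGroup.mk g) : ℂ)
      rw [MonoidHom.mul_apply, MonoidHom.inv_apply, Units.val_mul, ← mul_assoc,
        Units.val_inv_eq_inv_val]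
      rw [mul_inv_cancel₀ (Units.ne_zero _), one_mul]
    by_contra hS
    have h2 : ((ψ₀ (QuotientGroup.mk g) : ℂ) - 1)
        * ∑ ψ : (G ⧸ N) →* ℂˣ, ((ψ (QuotientGroup.mk g) : ℂ)) = 0 := by
      rw [sub_mul, one_mul, ← key, sub_self]
    rcases mul_eq_zero.mp h2 with h | h
    · exact hψ₀ (Units.ext (by simpa [sub_eq_zero] using h))
    · exact hS h

end Gal
namespace Gal

variable {G : Type} [Group G] [Fintype G] (N : Subgroup G) [N.Normal] [Fintype ↥N]

open scoped Classical in
lemma main_count (hab : ∀ a b : G ⧸ N, a * b = b * a) [Fintype (Theta N)]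
    (χ : FDRep ℂ ↥N) (χext : FDRep ℂ G) [Simple χext]
    (hext : ∀ n : ↥N, χext.character ↑n = χ.character n)
    (V : FDRep ℂ G) [Simple V] :
    ∑ n : ↥N, V.character ↑n * χ.character n⁻¹
      = (Fintype.card ↥N : ℂ) * ((Finset.univ.filter
          (fun θ : Theta N => Nonempty (V ≅ twist θ.1 χext))).card : ℂ) := by
  have hA : ∀ θ : Theta N, ∑ g : G, V.character g * (twist θ.1 χext).character g⁻¹
      = if Nonempty (V ≅ twist θ.1 χext) then (Fintype.card G : ℂ) else 0 := fun θ => by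
    haveI := simple_twist θ.1 χext
    exact orth V (twist θ.1 χext)
  have hS1 : ∑ θ : Theta N, ∑ g : G, V.character g * (twist θ.1 χext).character g⁻¹
      = (Fintype.card G : ℂ) * ((Finset.univ.filter
          (fun θ : Theta N => Nonempty (V ≅ twist θ.1 χext))).card : ℂ) := by
    rw [Finset.sum_congr rfl (fun θ _ => hA θ), Finset.sum_ite, Finset.sum_const,
      Finset.sum_const_zero, add_zero, nsmul_eq_mul, mul_comm]
  have hS2 : ∑ θ : Theta N, ∑ g : G, V.character g * (twist θ.1 χext).character g⁻¹
      = (Nat.card (G ⧸ N) : ℂ) * ∑ n : ↥N, V.character ↑n * χ.character n⁻¹ := by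
    rw [Finset.sum_comm]
    have hg : ∀ g : G, ∑ θ : Theta N, V.character g * (twist θ.1 χext).character g⁻¹
        = if g ∈ N then (V.character g * χext.character g⁻¹) * (Nat.card (G ⧸ N) : ℂ)
          else 0 := by
      intro g
      have h0 : ∀ θ : Theta N, V.character g * (twist θ.1 χext).character g⁻¹
          = (V.character g * χext.character g⁻¹) * θ.1 g⁻¹ := fun θ => by
        rw [twist_char]; ring
      rw [Finset.sum_congr rfl (fun θ _ => h0 θ), ← Finset.mul_sum, theta_sum N hab g⁻¹]
      simp only [inv_mem_iff]
      split
      · rfl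
      · rw [mul_zero]
    rw [Finset.sum_congr rfl (fun g _ => hg g), ← Finset.sum_filter,
      Finset.sum_subtype (p := (· ∈ N)) (Finset.univ.filter (· ∈ N)) (by simp)
        (fun g => (V.character g * χext.character g⁻¹) * (Nat.card (G ⧸ N) : ℂ))]
    rw [Finset.mul_sum]
    refine Finset.sum_congr rfl (fun n _ => ?_)
    have hcoe : χext.character ((↑n)⁻¹ : G) = χ.character n⁻¹ := by
      rw [show ((↑n)⁻¹ : G) = ((n⁻¹ : ↥N) : G) from rfl, hext]
    rw [hcoe]; ring
  have hG : (Fintype.card G : ℂ) = (Nat.card (G ⧸ N) : ℂ) * (Fintype.card ↥N : ℂ) := by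
    rw [← Nat.card_eq_fintype_card, ← Nat.card_eq_fintype_card,
      Subgroup.card_eq_card_quotient_mul_card_subgroup N]
    push_cast
    ring
  have hm : (Nat.card (G ⧸ N) : ℂ) ≠ 0 :=
    Nat.cast_ne_zero.mpr (Nat.card_pos (α := G ⧸ N)).ne'
  apply mul_left_cancel₀ hm
  rw [← hS2, hS1, hG]
  ring

end Gal

open CategoryTheory

theorem stmt_11 {G : Type} [Group G] [Fintype G] (N : Subgroup G) [N.Normal]
    [Fintype ↥N]
    (hab : ∀ a b : G ⧸ N, a * b = b * a)
    (χ : FDRep ℂ ↥N) [Simple χ]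
    (hinv : ∀ (g n : G) (hn : n ∈ N) (hgn : g * n * g⁻¹ ∈ N),
      χ.character ⟨g * n * g⁻¹, hgn⟩ = χ.character ⟨n, hn⟩)
    (χext : FDRep ℂ G) [Simple χext]
    (hext : ∀ n : N, χext.character ↑n = χ.character n) :
    Function.Injective
        (fun θ : {θ : G →* ℂ // ∀ n ∈ N, θ n = 1} =>
          (fun g => θ.1 g * χext.character g : G → ℂ)) ∧
      Set.range (fun θ : {θ : G →* ℂ // ∀ n ∈ N, θ n = 1} =>
          (fun g => θ.1 g * χext.character g : G → ℂ)) =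
        {f : G → ℂ | ∃ V : FDRep ℂ G, Simple V ∧ f = V.character ∧
          ∑ n : N, V.character ↑n * χ.character n⁻¹ ≠ 0} ∧
      {f : G → ℂ | ∃ V : FDRep ℂ G, Simple V ∧ f = V.character ∧
          ∑ n : N, V.character ↑n * χ.character n⁻¹ ≠ 0}.ncard =
        Nat.card (G ⧸ N) := by
  classical
  haveI : Finite (Gal.Theta N) := Gal.theta_finite N hab
  letI : Fintype (Gal.Theta N) := Fintype.ofFinite _
  set Φ := (fun θ : {θ : G →* ℂ // ∀ n ∈ N, θ n = 1} =>
          (fun g => θ.1 g * χext.character g : G → ℂ)) with hΦ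
  have F1 : ∀ θ : Gal.Theta N, Φ θ = (Gal.twist θ.1 χext).character :=
    fun θ => funext fun g => (Gal.twist_char θ.1 χext g).symm
  have hNne : (Fintype.card ↥N : ℂ) ≠ 0 := Nat.cast_ne_zero.mpr Fintype.card_ne_zero
  -- the counting identity
  have hmc : ∀ (V : FDRep ℂ G) [Simple V],
      ∑ n : ↥N, V.character ↑n * χ.character n⁻¹
        = (Fintype.card ↥N : ℂ) * ((Finset.univ.filter
            (fun θ : Gal.Theta N => Nonempty (V ≅ Gal.twist θ.1 χext))).card : ℂ) :=
    fun V _ => Gal.main_count N hab χ χext hext V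
  -- χext's own count is 1
  have hself : ∑ n : ↥N, χext.character ↑n * χ.character n⁻¹ = (Fintype.card ↥N : ℂ) := by
    have : ∀ n : ↥N, χext.character ↑n * χ.character n⁻¹
        = χ.character n * χ.character n⁻¹ := fun n => by rw [hext]
    rw [Finset.sum_congr rfl (fun n _ => this n), Gal.orth χ χ, if_pos ⟨Iso.refl χ⟩]
  have hcnt1 : (Finset.univ.filter
      (fun θ : Gal.Theta N => Nonempty (χext ≅ Gal.twist θ.1 χext))).card = 1 := by
    have h := (hmc χext).symm.trans hself
    have h2 : ((Finset.univ.filter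
        (fun θ : Gal.Theta N => Nonempty (χext ≅ Gal.twist θ.1 χext))).card : ℂ) = 1 := by
      have := mul_left_cancel₀ hNne (h.trans (mul_one _).symm)
      exact this
    exact_mod_cast h2
  have honemem : (⟨1, fun n _ => rfl⟩ : Gal.Theta N) ∈ Finset.univ.filter
      (fun θ : Gal.Theta N => Nonempty (χext ≅ Gal.twist θ.1 χext)) :=
    Finset.mem_filter.mpr ⟨Finset.mem_univ _, ⟨(Gal.twistOneIso χext).symm⟩⟩
  have F3 : ∀ θ : Gal.Theta N, Nonempty (χext ≅ Gal.twist θ.1 χext) →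
      θ = (⟨1, fun n _ => rfl⟩ : Gal.Theta N) := by
    intro θ hθ
    obtain ⟨a, ha⟩ := Finset.card_eq_one.mp hcnt1
    have h1 : θ ∈ Finset.univ.filter
        (fun θ : Gal.Theta N => Nonempty (χext ≅ Gal.twist θ.1 χext)) :=
      Finset.mem_filter.mpr ⟨Finset.mem_univ _, hθ⟩
    rw [ha, Finset.mem_singleton] at h1 honemem
    rw [h1, honemem]
  -- Injectivity
  have hinj : Function.Injective Φ := by
    intro θ₁ θ₂ h
    have hval : ∀ g : G, θ₂.1 g * χext.character g = θ₁.1 g * χext.character g :=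
      fun g => (congrFun h g).symm
    set lam : G →* ℂ := Gal.invHom θ₁.1 * θ₂.1 with hlam
    have hlamval : ∀ g : G, lam g = θ₁.1 g⁻¹ * θ₂.1 g := fun g => rfl
    have hltriv : ∀ n ∈ N, lam n = 1 := by
      intro n hn
      rw [hlamval, θ₁.2 _ (inv_mem hn), θ₂.2 _ hn, one_mul]
    have hchar : (Gal.twist lam χext).character = χext.character := by
      funext g
      rw [Gal.twist_char, hlamval, mul_assoc, hval g, ← mul_assoc, ← map_mul,
        inv_mul_cancel, map_one, one_mul]
    have hiso : Nonempty (χext ≅ Gal.twist lam χext) := by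
      haveI := Gal.simple_twist lam χext
      by_contra hno
      have ho := Gal.orth χext (Gal.twist lam χext)
      rw [if_neg hno] at ho
      have : ∀ g : G, χext.character g * (Gal.twist lam χext).character g⁻¹
          = χext.character g * χext.character g⁻¹ := fun g => by rw [hchar]
      rw [Finset.sum_congr rfl (fun g _ => this g), Gal.orth χext χext,
        if_pos ⟨Iso.refl χext⟩] at ho
      exact Nat.cast_ne_zero.mpr Fintype.card_ne_zero ho
    have := F3 ⟨lam, hltriv⟩ hiso
    have hlam1 : lam = 1 := congrArg Subtype.val this
    apply Subtype.ext
    ext g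
    have : lam g = 1 := by rw [hlam1]; rfl
    rw [hlamval] at this
    have h2 : θ₁.1 g * (θ₁.1 g⁻¹ * θ₂.1 g) = θ₁.1 g * 1 := congrArg (fun z => θ₁.1 g * z) this
    rw [← mul_assoc, ← map_mul, mul_inv_cancel, map_one, one_mul, mul_one] at h2
    exact h2.symm
  have hrange : Set.range Φ = {f : G → ℂ | ∃ V : FDRep ℂ G, Simple V ∧ f = V.character ∧
      ∑ n : N, V.character ↑n * χ.character n⁻¹ ≠ 0} := by
    ext f
    constructor
    · rintro ⟨θ, rfl⟩
      refine ⟨Gal.twist θ.1 χext, Gal.simple_twist θ.1 χext, F1 θ, ?_⟩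
      haveI := Gal.simple_twist θ.1 χext
      rw [hmc (Gal.twist θ.1 χext)]
      have hmem : θ ∈ Finset.univ.filter
          (fun η : Gal.Theta N => Nonempty (Gal.twist θ.1 χext ≅ Gal.twist η.1 χext)) :=
        Finset.mem_filter.mpr ⟨Finset.mem_univ _, ⟨Iso.refl _⟩⟩
      have hpos : 0 < (Finset.univ.filter
          (fun η : Gal.Theta N => Nonempty (Gal.twist θ.1 χext ≅ Gal.twist η.1 χext))).card :=
        Finset.card_pos.mpr ⟨θ, hmem⟩
      exact mul_ne_zero hNne (Nat.cast_ne_zero.mpr hpos.ne')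
    · rintro ⟨V, hV, hfV, hne⟩
      haveI := hV
      rw [hmc V] at hne
      have hcne : ((Finset.univ.filter
          (fun η : Gal.Theta N => Nonempty (V ≅ Gal.twist η.1 χext))).card : ℂ) ≠ 0 :=
        fun h => hne (by rw [h, mul_zero])
      have : (Finset.univ.filter
          (fun η : Gal.Theta N => Nonempty (V ≅ Gal.twist η.1 χext))).Nonempty := by
        rw [← Finset.card_pos]
        exact Nat.pos_of_ne_zero (fun h => hcne (by rw [h]; simp))
      obtain ⟨θ, hθ⟩ := this
      obtain ⟨i⟩ := (Finset.mem_filter.mp hθ).2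
      exact ⟨θ, by rw [F1 θ, ← FDRep.char_iso i, ← hfV]⟩
  exact ⟨hinj, hrange, by
    rw [← hrange, ← Nat.card_coe_set_eq, Nat.card_range_of_injective hinj,
      Gal.theta_card N hab]⟩
end
end
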